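/- If λ lies in the Garding cone Γ_k (i.e., σ_j(λ) > 0 for all j = 1,...,k), then for every h < k and every index 1 ≤ i ≤ n, σ_h(λ|i) > 0. -/

import Mathlib

open Finset

/-- The k-th elementary symmetric polynomial of λ ∈ ℝⁿ. -/
noncomputable def esymm (n k : ℕ) (lam : Fin n → ℝ) : ℝ :=
  ∑ s ∈ Finset.powersetCard k (Finset.univ : Finset (Fin n)), ∏ i ∈ s, lam i

/-- The Garding cone Γ_k. -/
def GammaCone (n k : ℕ) : Set (Fin n → ℝ) :=
  {lam | ∀ j, 1 ≤ j → j ≤ k → 0 < esymm n j lam}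

open Polynomial in


lemma exists_esymm_deriv (s : Multiset ℝ) (hs : 1 ≤ Multiset.card s) :
    ∃ s₁ : Multiset ℝ, Multiset.card s₁ = Multiset.card s - 1 ∧
      ∀ j, j ≤ Multiset.card s - 1 →
        (Multiset.card s : ℝ) * s₁.esymm j = ((Multiset.card s - j : ℕ) : ℝ) * s.esymm j := by
  classical
  set n := Multiset.card s with hn
  set p : ℝ[X] := (s.map fun r => X + C r).prod with hp
  have hmonic : p.Monic := monic_multiset_prod_of_monic _ _ (fun r _ => monic_X_add_C r)
  have hdeg : p.natDegree = n := by
    rw [hp, natDegree_multiset_prod_of_monic]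
    · simp [Multiset.map_map, Function.comp, hn]
    · intro f hf
      obtain ⟨r, _, rfl⟩ := Multiset.mem_map.mp hf
      exact monic_X_add_C r
  have hroots : p.roots = s.map fun r => -r := by
    have h1 : p = ((s.map fun r => -r).map fun a => X - C a).prod := by
      rw [hp, Multiset.map_map]
      congr 1
      apply Multiset.map_congr rfl
      intro x _
      simp [sub_neg_eq_add]
    rw [h1, roots_multiset_prod_X_sub_C]
  have hcroots : Multiset.card p.roots = n := by rw [hroots, Multiset.card_map]
  set q := derivative p with hq
  have hqdegle : q.natDegree ≤ n - 1 := hdeg ▸ natDegree_derivative_le p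
  have hqcard : Multiset.card q.roots = n - 1 := by
    have h1 := card_roots' q
    have h2 : n ≤ Multiset.card q.roots + 1 := by
      rw [hq]; exact hcroots ▸ card_roots_le_derivative p
    omega
  have hqdeg : q.natDegree = n - 1 := le_antisymm hqdegle (hqcard ▸ card_roots' q)
  have hsplits : q.Splits := splits_iff_card_roots.mpr (hqcard.trans hqdeg.symm)
  have hfact : q = C q.leadingCoeff * (q.roots.map fun a => X - C a).prod :=
    hsplits.eq_prod_roots
  have hlc : q.leadingCoeff = (n : ℝ) := by
    have h1 : q.coeff (n - 1) = p.coeff (n - 1 + 1) * ((n - 1 : ℕ) + 1) := coeff_derivative p (n-1)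
    have h2 : n - 1 + 1 = n := by omega
    have h3 : p.coeff n = 1 := hdeg ▸ hmonic.coeff_natDegree
    rw [leadingCoeff, hqdeg, h1, h2, h3, one_mul, Nat.cast_sub hs]
    push_cast
    ring
  refine ⟨q.roots.map fun r => -r, by rw [Multiset.card_map, hqcard], ?_⟩
  intro j hj
  set s₁ := q.roots.map fun r => -r with hs₁
  have hcs₁ : Multiset.card s₁ = n - 1 := by rw [hs₁, Multiset.card_map, hqcard]
  have hprodeq : (q.roots.map fun a => X - C a).prod = (s₁.map fun r => X + C r).prod := by
    rw [hs₁, Multiset.map_map]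
    congr 1
    apply Multiset.map_congr rfl
    intro x _
    simp only [Function.comp_apply, sub_eq_add_neg, ← map_neg C]
  -- coefficient computation two ways
  have way1 : q.coeff (n - 1 - j) = s.esymm j * ((n - j : ℕ) : ℝ) := by
    have h1 : q.coeff (n - 1 - j) = p.coeff (n - 1 - j + 1) * ((n - 1 - j : ℕ) + 1) :=
      coeff_derivative p (n - 1 - j)
    have h2 : n - 1 - j + 1 = n - j := by omega
    rw [h1, h2]
    have h3 : p.coeff (n - j) = s.esymm (Multiset.card s - (n - j)) :=
      Multiset.prod_X_add_C_coeff s (by omega)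
    have h4 : Multiset.card s - (n - j) = j := by omega
    rw [h3, h4]
    congr 1
    norm_cast
  have way2 : q.coeff (n - 1 - j) = (n : ℝ) * s₁.esymm j := by
    conv_lhs => rw [hfact]
    rw [coeff_C_mul, hlc, hprodeq]
    have h3 : ((s₁.map fun r => X + C r).prod).coeff (n - 1 - j)
        = s₁.esymm (Multiset.card s₁ - (n - 1 - j)) :=
      Multiset.prod_X_add_C_coeff s₁ (by omega)
    have h4 : Multiset.card s₁ - (n - 1 - j) = j := by omega
    rw [h3, h4]
  rw [← way2, way1]; ring

lemma esymm_zero (n : ℕ) (f : Fin n → ℝ) : esymm n 0 f = 1 := by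
  simp [esymm]

lemma esymm_update_zero (n h : ℕ) (lam : Fin n → ℝ) (i : Fin n) :
    esymm n h (Function.update lam i 0) =
      ∑ t ∈ (Finset.univ.erase i).powersetCard h, ∏ j ∈ t, lam j := by
  classical
  unfold esymm
  rw [← Finset.sum_filter_add_sum_filter_not _ (fun t => i ∈ t)]
  have h1 : ∑ t ∈ (Finset.powersetCard h (univ : Finset (Fin n))).filter (fun t => i ∈ t),
      ∏ j ∈ t, Function.update lam i 0 j = 0 := by
    apply Finset.sum_eq_zero
    intro t ht
    simp only [Finset.mem_filter] at ht
    exact Finset.prod_eq_zero ht.2 (by simp)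
  have h2 : (Finset.powersetCard h (univ : Finset (Fin n))).filter (fun t => i ∉ t)
      = (Finset.univ.erase i).powersetCard h := by
    ext t
    simp only [Finset.mem_filter, Finset.mem_powersetCard, Finset.subset_erase]
    tauto
  rw [h1, zero_add, h2]
  apply Finset.sum_congr rfl
  intro t ht
  apply Finset.prod_congr rfl
  intro j hj
  have : j ≠ i := by
    rw [Finset.mem_powersetCard, Finset.subset_erase] at ht
    intro hji; exact ht.1.2 (hji ▸ hj)
  simp [Function.update_of_ne this]

lemma esymm_split (n m : ℕ) (lam : Fin n → ℝ) (i : Fin n) :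
    esymm n (m+1) lam =
      esymm n (m+1) (Function.update lam i 0) + lam i * esymm n m (Function.update lam i 0) := by
  classical
  rw [esymm_update_zero, esymm_update_zero]
  have hu : (univ : Finset (Fin n)) = insert i (univ.erase i) :=
    (Finset.insert_erase (Finset.mem_univ i)).symm
  unfold esymm
  conv_lhs => rw [hu]
  rw [Finset.powersetCard_succ_insert (Finset.notMem_erase i _)]
  rw [Finset.sum_union]
  · congr 1
    rw [Finset.sum_image]
    · rw [Finset.mul_sum]
      apply Finset.sum_congr rfl
      intro t ht
      rw [Finset.mem_powersetCard] at ht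
      have hit : i ∉ t := fun hi => (Finset.notMem_erase i _) (ht.1 hi)
      rw [Finset.prod_insert hit]
    · intro t ht u hu' h
      rw [Finset.mem_coe, Finset.mem_powersetCard] at ht hu'
      have hit : i ∉ t := fun hi => (Finset.notMem_erase i _) (ht.1 hi)
      have hiu : i ∉ u := fun hi => (Finset.notMem_erase i _) (hu'.1 hi)
      have := congrArg (Finset.erase · i) h
      simpa [Finset.erase_insert, hit, hiu] using this
  · rw [Finset.disjoint_left]
    intro t ht htu
    rw [Finset.mem_powersetCard] at ht
    have hit : i ∉ t := fun hi => (Finset.notMem_erase i _) (ht.1 hi)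
    rw [Finset.mem_image] at htu
    obtain ⟨u, hu', rfl⟩ := htu
    exact hit (Finset.mem_insert_self i u)

lemma esymm_update_multiset (n h : ℕ) (lam : Fin n → ℝ) (i : Fin n) :
    esymm n h (Function.update lam i 0) = ((Finset.univ.erase i).val.map lam).esymm h := by
  rw [esymm_update_zero, Finset.esymm_map_val]

lemma sum_powersetCard_compl {ι : Type*} [Fintype ι] [DecidableEq ι] (j : ℕ)
    (hj : j ≤ Fintype.card ι) (F : Finset ι → ℝ) :
    ∑ t ∈ (univ : Finset ι).powersetCard (Fintype.card ι - j), F t =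
      ∑ t ∈ (univ : Finset ι).powersetCard j, F tᶜ := by
  apply Finset.sum_nbij' (i := fun t => tᶜ) (j := fun t => tᶜ)
  · intro t ht
    rw [Finset.mem_powersetCard_univ] at ht ⊢
    rw [Finset.card_compl, ht]
    omega
  · intro t ht
    rw [Finset.mem_powersetCard_univ] at ht ⊢
    rw [Finset.card_compl, ht]
  · intro t _; exact compl_compl t
  · intro t _; exact compl_compl t
  · intro t _; rw [compl_compl]

lemma sum_powersetCard_two {ι : Type*} [DecidableEq ι] (S : Finset ι) (g : ι → ℝ) :
    2 * ∑ t ∈ S.powersetCard 2, ∏ x ∈ t, g x =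
      (∑ x ∈ S, g x)^2 - ∑ x ∈ S, (g x)^2 := by
  classical
  induction S using Finset.induction_on with
  | empty =>
    rw [Finset.powersetCard_eq_empty.mpr (by simp)]
    simp
  | @insert a S ha IH =>
    have hdisj : Disjoint (S.powersetCard 2) ((S.powersetCard 1).image (insert a)) := by
      rw [Finset.disjoint_left]
      intro t ht htu
      rw [Finset.mem_powersetCard] at ht
      rw [Finset.mem_image] at htu
      obtain ⟨u, _, rfl⟩ := htu
      exact ha (ht.1 (Finset.mem_insert_self a u))
    rw [show (2:ℕ) = 1 + 1 from rfl, Finset.powersetCard_succ_insert ha, Finset.sum_union hdisj,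
      Finset.sum_image]
    · have h1 : ∑ t ∈ S.powersetCard 1, ∏ x ∈ insert a t, g x = g a * ∑ x ∈ S, g x := by
        rw [Finset.powersetCard_one, Finset.sum_map, Finset.mul_sum]
        apply Finset.sum_congr rfl
        intro x hx
        have hax : a ∉ ({x} : Finset ι) := by
          simp only [Finset.mem_singleton]; rintro rfl; exact ha hx
        simp [Finset.prod_insert hax]
      rw [h1, Finset.sum_insert ha, Finset.sum_insert ha]
      ring_nf
      ring_nf at IH
      linarith [IH]
    · intro t ht u hu h
      rw [Finset.mem_coe, Finset.mem_powersetCard] at ht hu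
      have hat : a ∉ t := fun h' => ha (ht.1 h')
      have hau : a ∉ u := fun h' => ha (hu.1 h')
      have := congrArg (Finset.erase · a) h
      simpa [Finset.erase_insert, hat, hau] using this

lemma newton_base (n : ℕ) (hn : 2 ≤ n) (f : Fin n → ℝ) :
    esymm n (n-2) f * esymm n n f * ((n:ℝ))^2 ≤ (esymm n (n-1) f)^2 * ((n.choose 2 : ℕ) : ℝ) := by
  classical
  set P : Fin n → ℝ := fun i => ∏ j ∈ univ.erase i, f j with hP
  have hcard : Fintype.card (Fin n) = n := Fintype.card_fin n
  have hi : esymm n (n-1) f = ∑ x, P x := by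
    unfold esymm
    have h := sum_powersetCard_compl (ι := Fin n) 1 (by omega) (fun t => ∏ j ∈ t, f j)
    rw [hcard] at h
    rw [h, Finset.powersetCard_one, Finset.sum_map]
    apply Finset.sum_congr rfl
    intro x _
    simp [Finset.compl_singleton, hP]
  have h2 : esymm n n f = ∏ j, f j := by
    unfold esymm
    have hps := Finset.powersetCard_self (univ : Finset (Fin n))
    rw [Finset.card_fin] at hps
    rw [hps, Finset.sum_singleton]
  have h3 : esymm n (n-2) f = ∑ t ∈ (univ : Finset (Fin n)).powersetCard 2, ∏ j ∈ tᶜ, f j := by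
    unfold esymm
    have h := sum_powersetCard_compl (ι := Fin n) 2 (by omega) (fun t => ∏ j ∈ t, f j)
    rw [hcard] at h
    exact h
  have hii : esymm n (n-2) f * esymm n n f
      = ∑ t ∈ (univ : Finset (Fin n)).powersetCard 2, ∏ x ∈ t, P x := by
    rw [h3, h2, Finset.sum_mul]
    apply Finset.sum_congr rfl
    intro t ht
    rw [Finset.mem_powersetCard_univ] at ht
    obtain ⟨a, b, hab, rfl⟩ := Finset.card_eq_two.mp ht
    rw [Finset.prod_pair hab]
    have hbmem : b ∈ univ.erase a := Finset.mem_erase.mpr ⟨hab.symm, Finset.mem_univ b⟩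
    have hamem : a ∈ univ.erase b := Finset.mem_erase.mpr ⟨hab, Finset.mem_univ a⟩
    have hc : ({a, b} : Finset (Fin n))ᶜ = (univ.erase a).erase b := by
      rw [show ({a,b} : Finset (Fin n)) = insert a {b} from rfl, Finset.compl_insert,
        Finset.compl_singleton, Finset.erase_right_comm]
    have hPa : P a = f b * ∏ j ∈ (univ.erase a).erase b, f j :=
      (Finset.mul_prod_erase (univ.erase a) f hbmem).symm
    have hPb : P b = f a * ∏ j ∈ (univ.erase a).erase b, f j := by
      show (∏ j ∈ univ.erase b, f j) = _
      rw [← Finset.mul_prod_erase (univ.erase b) f hamem, Finset.erase_right_comm]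
    have hprod : ∏ j, f j = f a * P a := (Finset.mul_prod_erase univ f (Finset.mem_univ a)).symm
    rw [hc, hprod, hPa, hPb]
    ring
  have hiii := sum_powersetCard_two (univ : Finset (Fin n)) P
  have hcs : (∑ x, P x)^2 ≤ (n:ℝ) * ∑ x, (P x)^2 := by
    have h := sq_sum_le_card_mul_sum_sq (s := (univ : Finset (Fin n))) (f := P)
    simpa using h
  have hdvd : 2 ∣ n * (n - 1) := by
    rcases Nat.even_or_odd n with h | h
    · exact Dvd.dvd.mul_right h.two_dvd _
    · exact Dvd.dvd.mul_left (Nat.Odd.sub_odd h odd_one).two_dvd _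
  have hch : 2 * ((n.choose 2 : ℕ) : ℝ) = (n:ℝ) * ((n:ℝ) - 1) := by
    have h1 : 2 * n.choose 2 = n * (n - 1) := by
      rw [Nat.choose_two_right]
      exact Nat.mul_div_cancel' hdvd
    have h2 : ((2 * n.choose 2 : ℕ) : ℝ) = ((n * (n - 1) : ℕ) : ℝ) := by exact_mod_cast h1
    push_cast [Nat.cast_sub (show 1 ≤ n by omega)] at h2
    linarith
  rw [hi, hii]
  nlinarith [hcs, hiii, mul_le_mul_of_nonneg_left hcs (show (0:ℝ) ≤ (n:ℝ) by positivity),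
    sq_nonneg (∑ x, P x)]


lemma multiset_exists_fun (s : Multiset ℝ) :
    ∃ f : Fin (Multiset.card s) → ℝ,
      Multiset.map f (univ : Finset (Fin (Multiset.card s))).val = s := by
  induction s using Quot.inductionOn with
  | _ l =>
    refine ⟨l.get, ?_⟩
    show Multiset.map l.get (univ : Finset (Fin l.length)).val = (l : Multiset ℝ)
    rw [Fin.univ_val_map]
    exact congrArg _ (List.ofFn_get l)

lemma choose_absorb (n j : ℕ) (hn : 1 ≤ n) (hj : j ≤ n - 1) :
    n * (n-1).choose j = n.choose j * (n - j) := by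
  have h1 := Nat.add_one_mul_choose_eq (n-1) j
  rw [show n - 1 + 1 = n from by omega] at h1
  rw [h1, Nat.choose_succ_right_eq]

lemma choose_logconcave (N j : ℕ) (hj : 1 ≤ j) (hjN : j + 1 ≤ N) :
    N.choose (j-1) * N.choose (j+1) ≤ N.choose j ^ 2 := by
  have h1 : N.choose (j+1) * (j+1) = N.choose j * (N - j) := Nat.choose_succ_right_eq N j
  have h2 : N.choose j * j = N.choose (j-1) * (N - (j-1)) := by
    have := Nat.choose_succ_right_eq N (j-1)
    rw [show j - 1 + 1 = j from by omega] at this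
    exact this
  have hpos : 0 < (j+1) * j := by positivity
  refine le_of_mul_le_mul_right ?_ hpos
  calc N.choose (j-1) * N.choose (j+1) * ((j+1) * j)
      = (N.choose (j+1) * (j+1)) * (N.choose (j-1) * j) := by ring
    _ = N.choose j * (N - j) * (N.choose (j-1) * j) := by rw [h1]
    _ ≤ N.choose j * (N - (j-1)) * (N.choose (j-1) * (j+1)) := by
        apply Nat.mul_le_mul
        · exact Nat.mul_le_mul_left _ (by omega)
        · exact Nat.mul_le_mul_left _ (by omega)
    _ = (N.choose (j-1) * (N - (j-1))) * (N.choose j * (j+1)) := by ring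
    _ = (N.choose j * j) * (N.choose j * (j+1)) := by rw [h2]
    _ = N.choose j ^ 2 * ((j+1) * j) := by ring

theorem newton_ineq (n : ℕ) : ∀ (s : Multiset ℝ) (k : ℕ), Multiset.card s = n →
    1 ≤ k → k + 1 ≤ n →
    s.esymm (k-1) * s.esymm (k+1) * ((n.choose k : ℕ) : ℝ)^2 ≤
      (s.esymm k)^2 * (((n.choose (k-1) : ℕ) : ℝ) * ((n.choose (k+1) : ℕ) : ℝ)) := by
  induction n using Nat.strong_induction_on with
  | _ n IH =>
  intro s k hcard hk hkn
  subst hcard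
  set n := Multiset.card s with hn
  rcases eq_or_lt_of_le hkn with heq | hlt
  · -- base case : k + 1 = n
    obtain ⟨f, hf⟩ := multiset_exists_fun s
    have hes : ∀ j, s.esymm j = esymm n j f := by
      intro j
      conv_lhs => rw [← hf]
      rw [Finset.esymm_map_val]
      rfl
    have h2n : 2 ≤ n := by omega
    have hb := newton_base n h2n f
    rw [hes (k-1), hes k, hes (k+1)]
    have e1 : k - 1 = n - 2 := by omega
    have e3 : k + 1 = n := heq
    have e2 : k = n - 1 := by omega
    rw [e1, e3, e2]
    have c1 : n.choose (n-1) = n := by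
      rw [Nat.choose_symm (show 1 ≤ n by omega), Nat.choose_one_right]
    have c2 : n.choose (n-2) = n.choose 2 := Nat.choose_symm (by omega)
    have c3 : n.choose n = 1 := Nat.choose_self n
    rw [c1, c2, c3]
    push_cast
    nlinarith [hb]
  · -- inductive step : k + 1 < n
    obtain ⟨s₁, hc₁, hrel⟩ := exists_esymm_deriv s (by omega)
    have IH' := IH (n-1) (by omega) s₁ k hc₁ hk (by omega)
    set a := s.esymm (k-1) with ha
    set b := s.esymm k with hb
    set c := s.esymm (k+1) with hc
    set a' := s₁.esymm (k-1)
    set b' := s₁.esymm k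
    set c' := s₁.esymm (k+1)
    have h1 : (n:ℝ) * a' = ((n - (k-1) : ℕ) : ℝ) * a := hrel (k-1) (by omega)
    have h2 : (n:ℝ) * b' = ((n - k : ℕ) : ℝ) * b := hrel k (by omega)
    have h3 : (n:ℝ) * c' = ((n - (k+1) : ℕ) : ℝ) * c := hrel (k+1) (by omega)
    have G1 : (n:ℝ) * ((n-1).choose (k-1) : ℕ) = ((n.choose (k-1) : ℕ) : ℝ) * ((n - (k-1) : ℕ) : ℝ) := by
      exact_mod_cast choose_absorb n (k-1) (by omega) (by omega)
    have G2 : (n:ℝ) * ((n-1).choose k : ℕ) = ((n.choose k : ℕ) : ℝ) * ((n - k : ℕ) : ℝ) := by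
      exact_mod_cast choose_absorb n k (by omega) (by omega)
    have G3 : (n:ℝ) * ((n-1).choose (k+1) : ℕ) = ((n.choose (k+1) : ℕ) : ℝ) * ((n - (k+1) : ℕ) : ℝ) := by
      exact_mod_cast choose_absorb n (k+1) (by omega) (by omega)
    set u := ((n - (k-1) : ℕ) : ℝ)
    set v := ((n - k : ℕ) : ℝ)
    set w := ((n - (k+1) : ℕ) : ℝ)
    set A := ((n.choose (k-1) : ℕ) : ℝ)
    set B := ((n.choose k : ℕ) : ℝ)
    set D := ((n.choose (k+1) : ℕ) : ℝ)
    have L : (n:ℝ)^4 * (a' * c' * (((n-1).choose k : ℕ) : ℝ)^2)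
        = (u * a) * (w * c) * (B * v)^2 := by
      calc (n:ℝ)^4 * (a' * c' * (((n-1).choose k : ℕ) : ℝ)^2)
          = ((n:ℝ)*a') * ((n:ℝ)*c') * ((n:ℝ)*(((n-1).choose k : ℕ) : ℝ))^2 := by ring
        _ = _ := by rw [h1, h3, G2]
    have R : (n:ℝ)^4 * (b'^2 * ((((n-1).choose (k-1) : ℕ) : ℝ) * (((n-1).choose (k+1) : ℕ) : ℝ)))
        = (v * b)^2 * ((A * u) * (D * w)) := by
      calc (n:ℝ)^4 * (b'^2 * ((((n-1).choose (k-1) : ℕ) : ℝ) * (((n-1).choose (k+1) : ℕ) : ℝ)))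
          = ((n:ℝ)*b')^2 * (((n:ℝ)*(((n-1).choose (k-1) : ℕ) : ℝ)) * ((n:ℝ)*(((n-1).choose (k+1) : ℕ) : ℝ))) := by ring
        _ = _ := by rw [h2, G1, G3]
    have key : (u * a) * (w * c) * (B * v)^2 ≤ (v * b)^2 * ((A * u) * (D * w)) := by
      rw [← L, ← R]
      exact mul_le_mul_of_nonneg_left IH' (by positivity)
    have hu : (0:ℝ) < u := by
      have : 1 ≤ n - (k-1) := by omega
      exact_mod_cast Nat.cast_pos.mpr (by omega)
    have hv : (0:ℝ) < v := Nat.cast_pos.mpr (by omega)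
    have hw : (0:ℝ) < w := Nat.cast_pos.mpr (by omega)
    have hfac : (0:ℝ) < u * w * v^2 := by positivity
    refine le_of_mul_le_mul_left ?_ hfac
    calc u * w * v^2 * (a * c * B^2) = (u * a) * (w * c) * (B * v)^2 := by ring
      _ ≤ (v * b)^2 * ((A * u) * (D * w)) := key
      _ = u * w * v^2 * (b^2 * (A * D)) := by ring


/-- If λ ∈ Γ_k then σ_h(λ|i) > 0 for all h < k and all i. -/
theorem sigma_truncated_pos (n k : ℕ) (lam : Fin n → ℝ) (hlam : lam ∈ GammaCone n k)
    (h : ℕ) (hh : h < k) (i : Fin n) :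
    0 < esymm n h (Function.update lam i 0) := by
  classical
  have hn1 : 1 ≤ n := i.pos
  have hσ : ∀ j, 1 ≤ j → j ≤ k → 0 < esymm n j lam := hlam
  have hkn : k ≤ n := by
    by_contra hgt
    push_neg at hgt
    have h0 : esymm n (n+1) lam = 0 := by
      unfold esymm
      rw [Finset.powersetCard_eq_empty.mpr (by rw [Finset.card_fin]; omega)]
      simp
    have := hσ (n+1) (by omega) (by omega)
    rw [h0] at this
    exact lt_irrefl 0 this
  suffices H : ∀ m, m < k → 0 < esymm n m (Function.update lam i 0) from H h hh
  intro m
  induction m using Nat.strong_induction_on with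
  | _ m IHm =>
  intro hm
  rcases Nat.eq_zero_or_pos m with rfl | hm1
  · rw [esymm_zero]
    norm_num
  set μ := Function.update lam i 0 with hμ
  by_contra hτ
  push_neg at hτ
  have hτm1 : 0 < esymm n (m-1) μ := IHm (m-1) (by omega) (by omega)
  have hsplitm : esymm n m lam = esymm n m μ + lam i * esymm n (m-1) μ := by
    have h' := esymm_split n (m-1) lam i
    rw [show m - 1 + 1 = m from by omega] at h'
    exact h'
  have hsplitm1 : esymm n (m+1) lam = esymm n (m+1) μ + lam i * esymm n m μ :=
    esymm_split n m lam i
  have hσm : 0 < esymm n m lam := hσ m hm1 (by omega)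
  have hσm1 : 0 < esymm n (m+1) lam := hσ (m+1) (by omega) (by omega)
  set a := lam i with haa
  rcases le_or_gt a 0 with ha | ha
  · nlinarith [mul_nonpos_of_nonpos_of_nonneg ha (le_of_lt hτm1)]
  have hτm1' : 0 < esymm n (m+1) μ := by
    nlinarith [mul_nonpos_of_nonneg_of_nonpos (le_of_lt ha) hτ]
  have hmn : m + 1 ≤ n - 1 := by
    by_contra hbig
    push_neg at hbig
    have hz : esymm n (m+1) μ = 0 := by
      rw [hμ, esymm_update_zero]
      rw [Finset.powersetCard_eq_empty.mpr ?_]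
      · simp
      · rw [Finset.card_erase_of_mem (Finset.mem_univ i), Finset.card_fin]
        omega
    rw [hz] at hτm1'
    exact lt_irrefl 0 hτm1'
  set s_i := ((Finset.univ.erase i).val.map lam) with hsi
  have hcs : Multiset.card s_i = n - 1 := by
    rw [hsi, Multiset.card_map]
    change (Finset.univ.erase i).card = n - 1
    rw [Finset.card_erase_of_mem (Finset.mem_univ i), Finset.card_fin]
  have hτeq : ∀ j, esymm n j μ = s_i.esymm j := fun j => by
    rw [hμ, esymm_update_multiset]
  have hN := newton_ineq (n-1) s_i m hcs hm1 hmn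
  have hlog : ((n-1).choose (m-1) * (n-1).choose (m+1) : ℕ) ≤ ((n-1).choose m)^2 :=
    choose_logconcave (n-1) m hm1 hmn
  rw [← hτeq (m-1), ← hτeq m, ← hτeq (m+1)] at hN
  set t0 := esymm n (m-1) μ with ht0
  set t1 := esymm n m μ with ht1
  set t2 := esymm n (m+1) μ with ht2
  have hBpos : (0:ℝ) < (((n-1).choose m : ℕ) : ℝ) := by
    exact_mod_cast Nat.choose_pos (show m ≤ n - 1 by omega)
  have hlogR : (((n-1).choose (m-1) : ℕ) : ℝ) * (((n-1).choose (m+1) : ℕ) : ℝ)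
      ≤ (((n-1).choose m : ℕ) : ℝ)^2 := by exact_mod_cast hlog
  have h1 : t0 * t2 ≤ t1^2 := by
    have hC2 : (0:ℝ) < (((n-1).choose m : ℕ) : ℝ)^2 := pow_pos hBpos 2
    have step : t0 * t2 * (((n-1).choose m : ℕ) : ℝ)^2 ≤ t1^2 * (((n-1).choose m : ℕ) : ℝ)^2 :=
      le_trans hN (by nlinarith [mul_le_mul_of_nonneg_left hlogR (sq_nonneg t1)])
    exact le_of_mul_le_mul_right step hC2
  have k1 : -t1 < a * t0 := by linarith
  have k2 : a * (-t1) < t2 := by linarith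
  have k3 : a * (t1^2) < a * (t0 * t2) := by
    calc a * (t1^2) = (-t1) * (a * (-t1)) := by ring
      _ ≤ (-t1) * t2 := mul_le_mul_of_nonneg_left (le_of_lt k2) (by linarith)
      _ < (a * t0) * t2 := mul_lt_mul_of_pos_right k1 hτm1'
      _ = a * (t0 * t2) := by ring
  have h2 : t1^2 < t0 * t2 := lt_of_mul_lt_mul_left k3 (le_of_lt ha)
  linarith
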